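/- The generator of the regular Dirichlet form has domain D(L^{(D)}) = {u ∈ D(Q^{(D)}) : L̃u ∈ ℓ²(V,m)}, and on this domain L^{(D)} acts as the formal Laplacian L̃. -/

import Mathlib

open scoped ENNReal NNReal BigOperators
open MeasureTheory Filter

/-- A weighted graph `(b,c)` over a vertex set `V`. -/
structure WeightedGraph (V : Type*) where
  b : V → V → ℝ
  c : V → ℝ
  b_nonneg : ∀ x y, 0 ≤ b x y
  b_diag : ∀ x, b x x = 0
  b_symm : ∀ x y, b x y = b y x
  b_summable : ∀ x, Summable fun y => b x y
  c_nonneg : ∀ x, 0 ≤ c x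

/-- Membership in `ℓ²(V,m)`. -/
def MemL2 {V : Type*} (m : V → ℝ) (u : V → ℝ) : Prop :=
  Summable fun x => u x ^ 2 * m x

/-- The inner product of `ℓ²(V,m)`. -/
noncomputable def l2inner {V : Type*} (m : V → ℝ) (u v : V → ℝ) : ℝ :=
  ∑' x, u x * v x * m x

namespace WeightedGraph

variable {V : Type*} (G : WeightedGraph V)

/-- The energy functional `Q̃` with values in `[0,∞]`. -/
noncomputable def energy (u : V → ℝ) : ℝ≥0∞ :=
  (1 / 2) * ∑' p : V × V, ENNReal.ofReal (G.b p.1 p.2 * (u p.1 - u p.2) ^ 2)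
    + ∑' x, ENNReal.ofReal (G.c x * u x ^ 2)

/-- The functions of finite energy (`D̃`). -/
def FiniteEnergy (u : V → ℝ) : Prop := G.energy u < ⊤

/-- The real-valued bilinear energy form (meaningful on functions of finite energy). -/
noncomputable def energyBilin (u v : V → ℝ) : ℝ :=
  (1 / 2) * ∑' p : V × V, G.b p.1 p.2 * (u p.1 - u p.2) * (v p.1 - v p.2)
    + ∑' x, G.c x * u x * v x

/-- The generalized vertex degree. -/
noncomputable def deg (x : V) : ℝ := (∑' y, G.b x y) + G.c x

/-- The formal Laplacian `L̃` associated with `(b,c)` and the measure `m`. -/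
noncomputable def formalL (m : V → ℝ) (u : V → ℝ) (x : V) : ℝ :=
  ((∑' y, G.b x y * (u x - u y)) + G.c x * u x) / m x

/-- Connectedness of the weighted graph: any two vertices are joined by a path of edges. -/
def Connected : Prop :=
  ∀ x y : V, ∃ (n : ℕ) (p : ℕ → V), p 0 = x ∧ p n = y ∧ ∀ i < n, 0 < G.b (p i) (p (i + 1))

/-- The squared distance of the Yamasaki space with base point `o`. -/
noncomputable def ydistSq (o : V) (u v : V → ℝ) : ℝ :=
  (G.energy (fun x => u x - v x)).toReal + (u o - v o) ^ 2

/-- The domain of the regular Dirichlet form `Q^(D)`: the closure of the finitely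
supported functions in `D̃ ∩ ℓ²(V,m)` with respect to the form norm. -/
def regDom (m : V → ℝ) : Set (V → ℝ) :=
  {u | G.FiniteEnergy u ∧ MemL2 m u ∧
    ∃ f : ℕ → V → ℝ, (∀ n, (Function.support (f n)).Finite) ∧
      Filter.Tendsto
        (fun n => (G.energy (fun x => u x - f n x)).toReal + ∑' x, (u x - f n x) ^ 2 * m x)
        Filter.atTop (nhds 0)}

/-- Transience of a Dirichlet form given by its domain: existence of a strictly positive
reference function `g ∈ ℓ¹(V,m) ∩ ℓ^∞(V)` with `⟨|u|,g⟩ ≤ Q(u)^{1/2}` on the domain. -/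
def FormTransient (m : V → ℝ) (dom : Set (V → ℝ)) : Prop :=
  ∃ g : V → ℝ, (∀ x, 0 < g x) ∧ (Summable fun x => g x * m x) ∧ (∃ C, ∀ x, g x ≤ C) ∧
    ∀ u ∈ dom, ∑' x, |u x| * g x * m x ≤ Real.sqrt (G.energyBilin u u)

end WeightedGraph

/-- The data of a Dirichlet form `Q` associated with a weighted graph `(b,c)` on `ℓ²(V,m)`,
together with its semigroup `T t = e^{-tL}` and resolvent `R α = (L+α)^{-1}`, with the
standard properties: `Q` is a restriction of `Q̃` with `D(Q^(D)) ⊆ D(Q) ⊆ D(Q^(N))`,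
the semigroup is symmetric, Markovian, positivity preserving, the resolvent is characterized
by the form, and the resolvent is the Laplace transform of the semigroup. -/
structure FormSetup {V : Type*} (G : WeightedGraph V) (m : V → ℝ) where
  dom : Set (V → ℝ)
  dom_fe : ∀ u ∈ dom, G.FiniteEnergy u
  dom_l2 : ∀ u ∈ dom, MemL2 m u
  reg_sub : G.regDom m ⊆ dom
  T : ℝ → (V → ℝ) → V → ℝ
  R : ℝ → (V → ℝ) → V → ℝ
  T_linear : ∀ t, IsLinearMap ℝ (T t)
  R_linear : ∀ α, IsLinearMap ℝ (R α)
  T_semigroup : ∀ s t : ℝ, 0 < s → 0 < t → ∀ f, T (s + t) f = T s (T t f)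
  T_l2 : ∀ t : ℝ, 0 < t → ∀ f, MemL2 m f → MemL2 m (T t f)
  T_symm : ∀ t : ℝ, 0 < t → ∀ f g, MemL2 m f → MemL2 m g →
    l2inner m (T t f) g = l2inner m f (T t g)
  T_contraction : ∀ t : ℝ, 0 < t → ∀ f, MemL2 m f →
    ∑' x, T t f x ^ 2 * m x ≤ ∑' x, f x ^ 2 * m x
  T_pos : ∀ t : ℝ, 0 < t → ∀ f, (∀ x, 0 ≤ f x) → ∀ x, 0 ≤ T t f x
  T_markov : ∀ t : ℝ, 0 < t → ∀ f, (∀ x, 0 ≤ f x ∧ f x ≤ 1) →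
    ∀ x, 0 ≤ T t f x ∧ T t f x ≤ 1
  T_cont : ∀ f, MemL2 m f → ∀ x, ContinuousOn (fun t => T t f x) (Set.Ioi (0 : ℝ))
  R_mem : ∀ α : ℝ, 0 < α → ∀ f, MemL2 m f → R α f ∈ dom
  R_pos : ∀ α : ℝ, 0 < α → ∀ f, (∀ x, 0 ≤ f x) → ∀ x, 0 ≤ R α f x
  R_char : ∀ α : ℝ, 0 < α → ∀ f, MemL2 m f → ∀ v ∈ dom,
    G.energyBilin (R α f) v + α * l2inner m (R α f) v = l2inner m f v
  R_laplace : ∀ α : ℝ, 0 < α → ∀ f, MemL2 m f → (∀ x, 0 ≤ f x) → ∀ y,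
    ENNReal.ofReal (R α f y) =
      ∫⁻ t in Set.Ioi (0 : ℝ), ENNReal.ofReal (Real.exp (-α * t) * T t f y)

namespace FormSetup

variable {V : Type*} {G : WeightedGraph V} {m : V → ℝ}

open scoped Classical in
/-- The Green function `G(x,y) = ∫₀^∞ (e^{-tL} δ_x)(y) dt`, with values in `[0,∞]`. -/
noncomputable def green (S : FormSetup G m) (x y : V) : ℝ≥0∞ :=
  ∫⁻ t in Set.Ioi (0 : ℝ), ENNReal.ofReal (S.T t (fun z => if z = x then 1 else 0) y)

/-- The extended Dirichlet space `D(Q)_e`: functions which are pointwise limits of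
`Q`-Cauchy sequences from `D(Q)`. -/
def extDom (S : FormSetup G m) : Set (V → ℝ) :=
  {u | ∃ f : ℕ → V → ℝ, (∀ n, f n ∈ S.dom) ∧
    (∀ ε > (0 : ℝ), ∃ N, ∀ p ≥ N, ∀ q ≥ N,
      G.energyBilin (fun x => f p x - f q x) (fun x => f p x - f q x) < ε) ∧
    ∀ x, Filter.Tendsto (fun n => f n x) Filter.atTop (nhds (u x))}

/-- Stochastic completeness: the resolvent `(L+1)^{-1}`, extended to `ℓ^∞(V)` by monotone
limits, maps the constant function `1` to `1`. -/
def StochComplete (S : FormSetup G m) : Prop :=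
  ∀ f : ℕ → V → ℝ, (∀ n, MemL2 m (f n)) →
    (∀ n x, 0 ≤ f n x ∧ f n x ≤ f (n + 1) x ∧ f n x ≤ 1) →
    (∀ x, Filter.Tendsto (fun n => f n x) Filter.atTop (nhds 1)) →
    ∀ x, Filter.Tendsto (fun n => S.R 1 (f n) x) Filter.atTop (nhds 1)

end FormSetup

namespace WeightedGraph

variable {V : Type*} {G : WeightedGraph V}

lemma edgeTerm_nonneg (u : V → ℝ) (p : V × V) : 0 ≤ G.b p.1 p.2 * (u p.1 - u p.2) ^ 2 :=
  mul_nonneg (G.b_nonneg _ _) (sq_nonneg _)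

lemma vertTerm_nonneg (u : V → ℝ) (x : V) : 0 ≤ G.c x * u x ^ 2 :=
  mul_nonneg (G.c_nonneg _) (sq_nonneg _)

lemma finiteEnergy_iff {u : V → ℝ} :
    G.FiniteEnergy u ↔ (Summable fun p : V × V => G.b p.1 p.2 * (u p.1 - u p.2) ^ 2) ∧
      Summable fun x => G.c x * u x ^ 2 := by
  unfold FiniteEnergy energy
  constructor
  · intro h
    rw [ENNReal.add_lt_top] at h
    obtain ⟨h1, h2⟩ := h
    have hS1 : (∑' p : V × V, ENNReal.ofReal (G.b p.1 p.2 * (u p.1 - u p.2) ^ 2)) ≠ ⊤ := by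
      intro hT
      rw [hT, ENNReal.mul_top (by norm_num)] at h1
      exact (lt_irrefl _ h1).elim
    refine ⟨?_, ?_⟩
    · exact (ENNReal.summable_toReal hS1).congr fun p =>
        ENNReal.toReal_ofReal (edgeTerm_nonneg u p)
    · exact (ENNReal.summable_toReal h2.ne).congr fun x =>
        ENNReal.toReal_ofReal (vertTerm_nonneg u x)
  · rintro ⟨h1, h2⟩
    rw [← ENNReal.ofReal_tsum_of_nonneg (edgeTerm_nonneg u) h1,
        ← ENNReal.ofReal_tsum_of_nonneg (vertTerm_nonneg u) h2]
    exact ENNReal.add_lt_top.mpr ⟨ENNReal.mul_lt_top (by norm_num) ENNReal.ofReal_lt_top,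
      ENNReal.ofReal_lt_top⟩

lemma energy_toReal {u : V → ℝ} (hu : G.FiniteEnergy u) :
    (G.energy u).toReal = (1 / 2) * (∑' p : V × V, G.b p.1 p.2 * (u p.1 - u p.2) ^ 2)
      + ∑' x, G.c x * u x ^ 2 := by
  obtain ⟨h1, h2⟩ := finiteEnergy_iff.mp hu
  unfold energy
  rw [← ENNReal.ofReal_tsum_of_nonneg (edgeTerm_nonneg u) h1,
      ← ENNReal.ofReal_tsum_of_nonneg (vertTerm_nonneg u) h2,
      ENNReal.toReal_add (ENNReal.mul_ne_top (by norm_num) ENNReal.ofReal_ne_top)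
        ENNReal.ofReal_ne_top,
      ENNReal.toReal_mul, ENNReal.toReal_ofReal (tsum_nonneg (edgeTerm_nonneg u)),
      ENNReal.toReal_ofReal (tsum_nonneg (vertTerm_nonneg u))]
  norm_num

end WeightedGraph
lemma tsum_cs_summable {ι : Type*} {a b : ι → ℝ} (ha : Summable fun i => a i ^ 2)
    (hb : Summable fun i => b i ^ 2) : Summable fun i => a i * b i := by
  apply Summable.of_abs
  apply Summable.of_nonneg_of_le (fun i => abs_nonneg _)
    (fun i => ?_) (((ha.add hb).div_const 2))
  have := sq_nonneg (|a i| - |b i|)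
  have h1 : |a i * b i| = |a i| * |b i| := abs_mul _ _
  have h2 : |a i| ^ 2 = a i ^ 2 := sq_abs _
  have h3 : |b i| ^ 2 = b i ^ 2 := sq_abs _
  nlinarith [abs_nonneg (a i), abs_nonneg (b i)]

lemma tsum_cs_sq {ι : Type*} {a b : ι → ℝ} (ha : Summable fun i => a i ^ 2)
    (hb : Summable fun i => b i ^ 2) :
    (∑' i, a i * b i) ^ 2 ≤ (∑' i, a i ^ 2) * (∑' i, b i ^ 2) := by
  have hab := tsum_cs_summable ha hb
  have key : ∀ t : ℝ, 0 ≤ (∑' i, b i ^ 2) * (t * t) + (2 * ∑' i, a i * b i) * t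
      + ∑' i, a i ^ 2 := by
    intro t
    have h1 : ∀ i, (a i + t * b i) ^ 2 = a i ^ 2 + t * (2 * (a i * b i)) + (t * t) * b i ^ 2 := by
      intro i; ring
    have : (0:ℝ) ≤ ∑' i, (a i + t * b i) ^ 2 := tsum_nonneg (fun i => sq_nonneg (a i + t * b i))
    calc (0:ℝ) ≤ ∑' i, (a i + t * b i) ^ 2 := this
    _ = (∑' i, a i ^ 2) + (t * (2 * ∑' i, a i * b i) + (t * t) * ∑' i, b i ^ 2) := by
        rw [tsum_congr h1,
          Summable.tsum_add (ha.add ((hab.mul_left 2).mul_left t)) (hb.mul_left (t * t)),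
          Summable.tsum_add ha ((hab.mul_left 2).mul_left t), tsum_mul_left, tsum_mul_left,
          tsum_mul_left]
        ring
    _ = (∑' i, b i ^ 2) * (t * t) + (2 * ∑' i, a i * b i) * t + ∑' i, a i ^ 2 := by ring
  have := discrim_le_zero key
  rw [discrim] at this
  nlinarith

namespace WeightedGraph

variable {V : Type*} {G : WeightedGraph V}

lemma summable_bmul {u v : V → ℝ} (hu : G.FiniteEnergy u) (hv : G.FiniteEnergy v) :
    Summable fun p : V × V => G.b p.1 p.2 * (u p.1 - u p.2) * (v p.1 - v p.2) := by
  have h1 := (finiteEnergy_iff.mp hu).1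
  have h2 := (finiteEnergy_iff.mp hv).1
  have key := tsum_cs_summable
    (a := fun p : V × V => Real.sqrt (G.b p.1 p.2) * (u p.1 - u p.2))
    (b := fun p : V × V => Real.sqrt (G.b p.1 p.2) * (v p.1 - v p.2)) ?_ ?_
  · apply key.congr
    intro p
    have h : Real.sqrt (G.b p.1 p.2) * Real.sqrt (G.b p.1 p.2) = G.b p.1 p.2 :=
      Real.mul_self_sqrt (G.b_nonneg _ _)
    linear_combination (u p.1 - u p.2) * (v p.1 - v p.2) * h
  · apply h1.congr; intro p
    rw [mul_pow, Real.sq_sqrt (G.b_nonneg _ _)]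
  · apply h2.congr; intro p
    rw [mul_pow, Real.sq_sqrt (G.b_nonneg _ _)]

lemma summable_cmul {u v : V → ℝ} (hu : G.FiniteEnergy u) (hv : G.FiniteEnergy v) :
    Summable fun x => G.c x * u x * v x := by
  have h1 := (finiteEnergy_iff.mp hu).2
  have h2 := (finiteEnergy_iff.mp hv).2
  have key := tsum_cs_summable
    (a := fun x => Real.sqrt (G.c x) * u x)
    (b := fun x => Real.sqrt (G.c x) * v x) ?_ ?_
  · apply key.congr
    intro x
    have h : Real.sqrt (G.c x) * Real.sqrt (G.c x) = G.c x := Real.mul_self_sqrt (G.c_nonneg _)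
    linear_combination u x * v x * h
  · apply h1.congr; intro x; rw [mul_pow, Real.sq_sqrt (G.c_nonneg _)]
  · apply h2.congr; intro x; rw [mul_pow, Real.sq_sqrt (G.c_nonneg _)]

lemma energyBilin_self {u : V → ℝ} (hu : G.FiniteEnergy u) :
    G.energyBilin u u = (G.energy u).toReal := by
  rw [energy_toReal hu]
  unfold energyBilin
  have e1 : (∑' p : V × V, G.b p.1 p.2 * (u p.1 - u p.2) * (u p.1 - u p.2))
      = ∑' p : V × V, G.b p.1 p.2 * (u p.1 - u p.2) ^ 2 := tsum_congr fun p => by ring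
  have e2 : (∑' x, G.c x * u x * u x) = ∑' x, G.c x * u x ^ 2 := tsum_congr fun x => by ring
  rw [e1, e2]

lemma energyBilin_self_nonneg {u : V → ℝ} (hu : G.FiniteEnergy u) :
    0 ≤ G.energyBilin u u := by
  rw [energyBilin_self hu]; exact ENNReal.toReal_nonneg

lemma finiteEnergy_sub {u v : V → ℝ} (hu : G.FiniteEnergy u) (hv : G.FiniteEnergy v) :
    G.FiniteEnergy (fun x => u x - v x) := by
  obtain ⟨h1, h2⟩ := finiteEnergy_iff.mp hu
  obtain ⟨h3, h4⟩ := finiteEnergy_iff.mp hv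
  rw [finiteEnergy_iff]
  have hdom1 : Summable (fun p : V × V => 2 * (G.b p.1 p.2 * (u p.1 - u p.2) ^ 2)
      + 2 * (G.b p.1 p.2 * (v p.1 - v p.2) ^ 2)) := (h1.mul_left 2).add (h3.mul_left 2)
  have hdom2 : Summable (fun x => 2 * (G.c x * u x ^ 2) + 2 * (G.c x * v x ^ 2)) :=
    (h2.mul_left 2).add (h4.mul_left 2)
  constructor
  · refine hdom1.of_nonneg_of_le (fun p => mul_nonneg (G.b_nonneg _ _) (sq_nonneg _))
      fun p => ?_
    have hb := G.b_nonneg p.1 p.2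
    nlinarith [sq_nonneg ((u p.1 - u p.2) + (v p.1 - v p.2))]
  · refine hdom2.of_nonneg_of_le (fun x => mul_nonneg (G.c_nonneg _) (sq_nonneg _))
      fun x => ?_
    have hc := G.c_nonneg x
    nlinarith [sq_nonneg (u x + v x)]

lemma finiteEnergy_add {u v : V → ℝ} (hu : G.FiniteEnergy u) (hv : G.FiniteEnergy v) :
    G.FiniteEnergy (fun x => u x + v x) := by
  obtain ⟨h1, h2⟩ := finiteEnergy_iff.mp hu
  obtain ⟨h3, h4⟩ := finiteEnergy_iff.mp hv
  rw [finiteEnergy_iff]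
  have hdom1 : Summable (fun p : V × V => 2 * (G.b p.1 p.2 * (u p.1 - u p.2) ^ 2)
      + 2 * (G.b p.1 p.2 * (v p.1 - v p.2) ^ 2)) := (h1.mul_left 2).add (h3.mul_left 2)
  have hdom2 : Summable (fun x => 2 * (G.c x * u x ^ 2) + 2 * (G.c x * v x ^ 2)) :=
    (h2.mul_left 2).add (h4.mul_left 2)
  constructor
  · refine hdom1.of_nonneg_of_le (fun p => mul_nonneg (G.b_nonneg _ _) (sq_nonneg _))
      fun p => ?_
    have hb := G.b_nonneg p.1 p.2
    nlinarith [sq_nonneg ((u p.1 - u p.2) - (v p.1 - v p.2))]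
  · refine hdom2.of_nonneg_of_le (fun x => mul_nonneg (G.c_nonneg _) (sq_nonneg _))
      fun x => ?_
    have hc := G.c_nonneg x
    nlinarith [sq_nonneg (u x - v x)]

lemma energyBilin_add_right {u v w : V → ℝ} (hu : G.FiniteEnergy u) (hv : G.FiniteEnergy v)
    (hw : G.FiniteEnergy w) :
    G.energyBilin u (fun x => v x + w x) = G.energyBilin u v + G.energyBilin u w := by
  unfold energyBilin
  have e1 : (∑' p : V × V, G.b p.1 p.2 * (u p.1 - u p.2) * ((v p.1 + w p.1) - (v p.2 + w p.2)))
      = (∑' p : V × V, G.b p.1 p.2 * (u p.1 - u p.2) * (v p.1 - v p.2))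
        + ∑' p : V × V, G.b p.1 p.2 * (u p.1 - u p.2) * (w p.1 - w p.2) := by
    rw [← Summable.tsum_add (summable_bmul hu hv) (summable_bmul hu hw)]
    exact tsum_congr fun p => by ring
  have e2 : (∑' x, G.c x * u x * (v x + w x))
      = (∑' x, G.c x * u x * v x) + ∑' x, G.c x * u x * w x := by
    rw [← Summable.tsum_add (summable_cmul hu hv) (summable_cmul hu hw)]
    exact tsum_congr fun x => by ring
  rw [e1, e2]; ring

lemma energyBilin_smul_right (u v : V → ℝ) (a : ℝ) :
    G.energyBilin u (fun x => a * v x) = a * G.energyBilin u v := by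
  unfold energyBilin
  have e1 : (∑' p : V × V, G.b p.1 p.2 * (u p.1 - u p.2) * ((a * v p.1) - (a * v p.2)))
      = a * ∑' p : V × V, G.b p.1 p.2 * (u p.1 - u p.2) * (v p.1 - v p.2) := by
    rw [← tsum_mul_left]; exact tsum_congr fun p => by ring
  have e2 : (∑' x, G.c x * u x * (a * v x)) = a * ∑' x, G.c x * u x * v x := by
    rw [← tsum_mul_left]; exact tsum_congr fun x => by ring
  rw [e1, e2]; ring

lemma finiteEnergy_smul {v : V → ℝ} (t : ℝ) (hv : G.FiniteEnergy v) :
    G.FiniteEnergy (fun x => t * v x) := by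
  obtain ⟨h1, h2⟩ := finiteEnergy_iff.mp hv
  rw [finiteEnergy_iff]
  constructor
  · exact ((h1.mul_left (t ^ 2)).congr fun p => by ring)
  · exact ((h2.mul_left (t ^ 2)).congr fun x => by ring)

lemma energyBilin_expand {u v : V → ℝ} (hu : G.FiniteEnergy u) (hv : G.FiniteEnergy v)
    (t : ℝ) : G.energyBilin (fun x => u x + t * v x) (fun x => u x + t * v x)
      = G.energyBilin u u + t * (2 * G.energyBilin u v) + (t * t) * G.energyBilin v v := by
  have suu := summable_bmul hu hu
  have suv := summable_bmul hu hv
  have svv := summable_bmul hv hv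
  have cuu := summable_cmul hu hu
  have cuv := summable_cmul hu hv
  have cvv := summable_cmul hv hv
  unfold energyBilin
  have e1 : (∑' p : V × V, G.b p.1 p.2 * ((u p.1 + t * v p.1) - (u p.2 + t * v p.2))
        * ((u p.1 + t * v p.1) - (u p.2 + t * v p.2)))
      = (∑' p : V × V, G.b p.1 p.2 * (u p.1 - u p.2) * (u p.1 - u p.2))
        + (t * (2 * ∑' p : V × V, G.b p.1 p.2 * (u p.1 - u p.2) * (v p.1 - v p.2))
        + (t * t) * ∑' p : V × V, G.b p.1 p.2 * (v p.1 - v p.2) * (v p.1 - v p.2)) := by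
    rw [← tsum_mul_left (a := t * t), ← tsum_mul_left (a := 2), ← tsum_mul_left (a := t),
      ← Summable.tsum_add ((suv.mul_left 2).mul_left t) (svv.mul_left (t * t)),
      ← Summable.tsum_add suu (((suv.mul_left 2).mul_left t).add (svv.mul_left (t * t)))]
    exact tsum_congr fun p => by ring
  have e2 : (∑' x, G.c x * (u x + t * v x) * (u x + t * v x))
      = (∑' x, G.c x * u x * u x)
        + (t * (2 * ∑' x, G.c x * u x * v x) + (t * t) * ∑' x, G.c x * v x * v x) := by
    rw [← tsum_mul_left (a := t * t), ← tsum_mul_left (a := 2), ← tsum_mul_left (a := t),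
      ← Summable.tsum_add ((cuv.mul_left 2).mul_left t) (cvv.mul_left (t * t)),
      ← Summable.tsum_add cuu (((cuv.mul_left 2).mul_left t).add (cvv.mul_left (t * t)))]
    exact tsum_congr fun x => by ring
  rw [e1, e2]; ring

lemma energyBilin_cs {u v : V → ℝ} (hu : G.FiniteEnergy u) (hv : G.FiniteEnergy v) :
    (G.energyBilin u v) ^ 2 ≤ G.energyBilin u u * G.energyBilin v v := by
  have key : ∀ t : ℝ, 0 ≤ G.energyBilin v v * (t * t) + (2 * G.energyBilin u v) * t
      + G.energyBilin u u := by
    intro t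
    have hw : G.FiniteEnergy (fun x => u x + t * v x) :=
      finiteEnergy_add hu (finiteEnergy_smul t hv)
    have h0 := energyBilin_self_nonneg hw
    rw [energyBilin_expand hu hv t] at h0
    linarith
  have := discrim_le_zero key
  rw [discrim] at this
  nlinarith

end WeightedGraph
namespace WeightedGraph
open scoped Classical
variable {V : Type*} {G : WeightedGraph V}

section lines
open Function

lemma line_left_inj (x : V) : Function.Injective (fun y : V => ((x, y) : V × V)) :=
  fun a b h => congrArg Prod.snd h

lemma line_right_inj (x : V) : Function.Injective (fun y : V => ((y, x) : V × V)) :=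
  fun a b h => congrArg Prod.fst h

lemma line_left_support (x : V) (g : V → ℝ) :
    ∀ p ∉ Set.range (fun y : V => ((x, y) : V × V)),
      (fun p : V × V => if p.1 = x then g p.2 else 0) p = 0 := by
  intro p hp
  by_cases h : p.1 = x
  · exact absurd ⟨p.2, by ext <;> simp [h]⟩ hp
  · simp [h]

lemma line_right_support (x : V) (g : V → ℝ) :
    ∀ p ∉ Set.range (fun y : V => ((y, x) : V × V)),
      (fun p : V × V => if p.2 = x then g p.1 else 0) p = 0 := by
  intro p hp
  by_cases h : p.2 = x
  · exact absurd ⟨p.1, by ext <;> simp [h]⟩ hp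
  · simp [h]

lemma summable_line_left {g : V → ℝ} (hg : Summable g) (x : V) :
    Summable (fun p : V × V => if p.1 = x then g p.2 else 0) := by
  rw [← Function.Injective.summable_iff (line_left_inj x) (line_left_support x g)]
  exact hg.congr fun y => by simp [Function.comp]

lemma summable_line_right {g : V → ℝ} (hg : Summable g) (x : V) :
    Summable (fun p : V × V => if p.2 = x then g p.1 else 0) := by
  rw [← Function.Injective.summable_iff (line_right_inj x) (line_right_support x g)]
  exact hg.congr fun y => by simp [Function.comp]

lemma tsum_line_left (g : V → ℝ) (x : V) :
    (∑' p : V × V, if p.1 = x then g p.2 else 0) = ∑' y, g y := by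
  rw [← Function.Injective.tsum_eq (line_left_inj x) (f := fun p : V × V => if p.1 = x then g p.2 else 0)]
  · exact tsum_congr fun y => by simp
  · intro p hp
    by_contra hr
    exact hp (line_left_support x g p hr)

lemma tsum_line_right (g : V → ℝ) (x : V) :
    (∑' p : V × V, if p.2 = x then g p.1 else 0) = ∑' y, g y := by
  rw [← Function.Injective.tsum_eq (line_right_inj x) (f := fun p : V × V => if p.2 = x then g p.1 else 0)]
  · exact tsum_congr fun y => by simp
  · intro p hp
    by_contra hr
    exact hp (line_right_support x g p hr)

end lines

lemma summable_slice {u : V → ℝ} (hu : G.FiniteEnergy u) (x : V) :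
    Summable fun y => G.b x y * (u x - u y) := by
  have hsq : Summable fun y => G.b x y * (u x - u y) ^ 2 := by
    have := (finiteEnergy_iff.mp hu).1.prod_factor x
    exact this
  have key := tsum_cs_summable (a := fun y => Real.sqrt (G.b x y))
    (b := fun y => Real.sqrt (G.b x y) * (u x - u y)) ?_ ?_
  · apply key.congr
    intro y
    have h : Real.sqrt (G.b x y) * Real.sqrt (G.b x y) = G.b x y :=
      Real.mul_self_sqrt (G.b_nonneg _ _)
    linear_combination (u x - u y) * h
  · exact (G.b_summable x).congr fun y => (Real.sq_sqrt (G.b_nonneg _ _)).symm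
  · apply hsq.congr
    intro y
    rw [mul_pow, Real.sq_sqrt (G.b_nonneg _ _)]

/-- Green's formula against a delta function. -/
lemma energyBilin_delta {u : V → ℝ} (hu : G.FiniteEnergy u) (x : V) :
    G.energyBilin u (fun z => if z = x then 1 else 0)
      = (∑' y, G.b x y * (u x - u y)) + G.c x * u x := by
  classical
  set g : V → ℝ := fun y => G.b x y * (u x - u y) with hgdef
  have hg : Summable g := summable_slice hu x
  have hF : ∀ p : V × V,
      G.b p.1 p.2 * (u p.1 - u p.2) * ((if p.1 = x then (1:ℝ) else 0) - (if p.2 = x then 1 else 0))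
        = (if p.1 = x then g p.2 else 0) + (if p.2 = x then g p.1 else 0) := by
    intro p
    simp only [hgdef]
    by_cases h1 : p.1 = x <;> by_cases h2 : p.2 = x
    · rw [h1, h2, if_pos rfl, if_pos rfl, G.b_diag]; ring
    · rw [h1, if_pos rfl, if_pos rfl, if_neg h2, if_neg h2]; ring
    · rw [h2, if_pos rfl, if_pos rfl, if_neg h1, if_neg h1, G.b_symm p.1 x]; ring
    · rw [if_neg h1, if_neg h1, if_neg h2, if_neg h2]; ring
  have edge : (∑' p : V × V, G.b p.1 p.2 * (u p.1 - u p.2)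
        * ((if p.1 = x then (1:ℝ) else 0) - (if p.2 = x then 1 else 0)))
      = 2 * ∑' y, g y := by
    rw [tsum_congr hF, Summable.tsum_add (summable_line_left hg x) (summable_line_right hg x),
      tsum_line_left, tsum_line_right]
    ring
  have vert : (∑' z, G.c z * u z * (if z = x then (1:ℝ) else 0)) = G.c x * u x := by
    have : ∀ z, G.c z * u z * (if z = x then (1:ℝ) else 0)
        = if z = x then G.c x * u x else 0 := by
      intro z; by_cases h : z = x <;> simp [h]
    rw [tsum_congr this, tsum_ite_eq]
  unfold energyBilin
  rw [edge, vert]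
  ring

lemma finiteEnergy_delta (x : V) :
    G.FiniteEnergy (fun z => if z = x then (1:ℝ) else 0) := by
  classical
  rw [finiteEnergy_iff]
  constructor
  · set gE : V → ℝ := fun y => G.b x y * ((1:ℝ) - (if y = x then (1:ℝ) else 0)) ^ 2 with hgE
    set gE2 : V → ℝ := fun y => if y = x then 0 else G.b x y with hgE2
    have hgEs : Summable gE := by
      apply (G.b_summable x).of_nonneg_of_le
        (fun y => mul_nonneg (G.b_nonneg _ _) (sq_nonneg _))
      intro y
      by_cases h : y = x <;> simp [hgE, h, G.b_nonneg x y, G.b_nonneg x x]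
    have hgE2s : Summable gE2 := by
      apply (G.b_summable x).of_nonneg_of_le (fun y => ?_) (fun y => ?_) <;>
        by_cases h : y = x <;> simp [hgE2, h, G.b_nonneg x y, G.b_nonneg x x]
    have hF : ∀ p : V × V,
        G.b p.1 p.2 * ((if p.1 = x then (1:ℝ) else 0) - (if p.2 = x then 1 else 0)) ^ 2
          = (if p.1 = x then gE p.2 else 0) + (if p.2 = x then gE2 p.1 else 0) := by
      intro p
      simp only [hgE, hgE2]
      by_cases h1 : p.1 = x <;> by_cases h2 : p.2 = x
      · simp [h1, h2, G.b_diag]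
      · simp [h1, h2]
      · simp [h1, h2, G.b_symm p.1 x]
      · simp [h1, h2]
    exact (Summable.congr ((summable_line_left hgEs x).add (summable_line_right hgE2s x))
      (fun p => (hF p).symm))
  · apply summable_of_ne_finset_zero (s := {x})
    intro z hz
    simp only [Finset.mem_singleton] at hz
    simp [hz]

lemma memL2_delta (m : V → ℝ) (x : V) :
    MemL2 m (fun z => if z = x then (1:ℝ) else 0) := by
  classical
  apply summable_of_ne_finset_zero (s := {x})
  intro z hz
  simp only [Finset.mem_singleton] at hz
  simp [hz]

lemma delta_regDom (m : V → ℝ) (x : V) :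
    (fun z => if z = x then (1:ℝ) else 0) ∈ G.regDom m := by
  classical
  refine ⟨finiteEnergy_delta x, memL2_delta m x,
    fun _ => (fun z => if z = x then (1:ℝ) else 0), fun n => ?_, ?_⟩
  · apply Set.Finite.subset (Set.finite_singleton x)
    intro z hz
    simp only [Function.mem_support] at hz
    by_contra h
    simp only [Set.mem_singleton_iff] at h
    exact hz (by simp [h])
  · have : (fun n : ℕ => (G.energy (fun z => (if z = x then (1:ℝ) else 0)
        - (if z = x then (1:ℝ) else 0))).toReal
        + ∑' z, ((if z = x then (1:ℝ) else 0) - (if z = x then (1:ℝ) else 0)) ^ 2 * m z)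
        = fun _ => 0 := by
      funext n
      have h0 : (fun z => (if z = x then (1:ℝ) else 0) - (if z = x then (1:ℝ) else 0))
          = fun _ => (0:ℝ) := by funext z; ring
      rw [h0]
      have : G.energy (fun _ => (0:ℝ)) = 0 := by
        unfold energy
        simp
      rw [this]
      simp
    rw [this]
    exact tendsto_const_nhds

end WeightedGraph
namespace WeightedGraph
open scoped Classical
variable {V : Type*} {G : WeightedGraph V}

lemma memL2_sub {m : V → ℝ} (hm : ∀ x, 0 ≤ m x) {u v : V → ℝ} (hu : MemL2 m u)
    (hv : MemL2 m v) : MemL2 m (fun x => u x - v x) := by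
  have hdom : Summable (fun x => 2 * (u x ^ 2 * m x) + 2 * (v x ^ 2 * m x)) :=
    (hu.mul_left 2).add (hv.mul_left 2)
  refine hdom.of_nonneg_of_le (fun x => mul_nonneg (sq_nonneg _) (hm x)) fun x => ?_
  show (u x - v x) ^ 2 * m x ≤ 2 * (u x ^ 2 * m x) + 2 * (v x ^ 2 * m x)
  have := hm x
  nlinarith [sq_nonneg (u x + v x), sq_nonneg (u x - v x)]

lemma memL2_finsupp (m : V → ℝ) {φ : V → ℝ} (hφ : (Function.support φ).Finite) :
    MemL2 m φ := by
  apply summable_of_ne_finset_zero (s := hφ.toFinset)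
  intro z hz
  have : φ z = 0 := by
    by_contra h
    exact hz (hφ.mem_toFinset.mpr h)
  simp [this]

lemma summable_inner {m : V → ℝ} (hm : ∀ x, 0 ≤ m x) {u v : V → ℝ} (hu : MemL2 m u)
    (hv : MemL2 m v) : Summable fun x => u x * v x * m x := by
  have key := tsum_cs_summable (a := fun x => u x * Real.sqrt (m x))
    (b := fun x => v x * Real.sqrt (m x)) ?_ ?_
  · apply key.congr
    intro x
    have h : Real.sqrt (m x) * Real.sqrt (m x) = m x := Real.mul_self_sqrt (hm x)
    linear_combination u x * v x * h
  · exact hu.congr fun x => by rw [mul_pow, Real.sq_sqrt (hm x)]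
  · exact hv.congr fun x => by rw [mul_pow, Real.sq_sqrt (hm x)]

lemma l2inner_cs {m : V → ℝ} (hm : ∀ x, 0 ≤ m x) {u v : V → ℝ} (hu : MemL2 m u)
    (hv : MemL2 m v) :
    (l2inner m u v) ^ 2 ≤ (∑' x, u x ^ 2 * m x) * ∑' x, v x ^ 2 * m x := by
  have h1 : Summable fun x => (u x * Real.sqrt (m x)) ^ 2 :=
    hu.congr fun x => by rw [mul_pow, Real.sq_sqrt (hm x)]
  have h2 : Summable fun x => (v x * Real.sqrt (m x)) ^ 2 :=
    hv.congr fun x => by rw [mul_pow, Real.sq_sqrt (hm x)]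
  have key := tsum_cs_sq h1 h2
  have e0 : l2inner m u v = ∑' x, (u x * Real.sqrt (m x)) * (v x * Real.sqrt (m x)) := by
    unfold l2inner
    refine tsum_congr fun x => ?_
    have h : Real.sqrt (m x) * Real.sqrt (m x) = m x := Real.mul_self_sqrt (hm x)
    linear_combination u x * v x * h.symm
  have e1 : (∑' x, (u x * Real.sqrt (m x)) ^ 2) = ∑' x, u x ^ 2 * m x :=
    tsum_congr fun x => by rw [mul_pow, Real.sq_sqrt (hm x)]
  have e2 : (∑' x, (v x * Real.sqrt (m x)) ^ 2) = ∑' x, v x ^ 2 * m x :=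
    tsum_congr fun x => by rw [mul_pow, Real.sq_sqrt (hm x)]
  rw [e0, ← e1, ← e2]
  exact key

lemma finiteEnergy_zero : G.FiniteEnergy (fun _ => (0:ℝ)) := by
  rw [finiteEnergy_iff]
  constructor
  · exact summable_zero.congr fun p => by ring
  · exact summable_zero.congr fun x => by ring

lemma finiteEnergy_finsum (F : Finset V) (ψ : V → ℝ) :
    G.FiniteEnergy (fun z => ∑ x ∈ F, if z = x then ψ x else 0) := by
  induction F using Finset.induction_on with
  | empty => simpa using (finiteEnergy_zero (G := G))
  | @insert a F ha ih =>
    have hrep : (fun z => ∑ x ∈ insert a F, if z = x then ψ x else 0)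
        = fun z => (if z = a then ψ a else 0) + ∑ x ∈ F, if z = x then ψ x else 0 := by
      funext z
      rw [Finset.sum_insert ha]
    rw [hrep]
    have hsingle : G.FiniteEnergy (fun z => if z = a then ψ a else 0) := by
      have : (fun z => if z = a then ψ a else 0)
          = fun z => ψ a * (if z = a then (1:ℝ) else 0) := by
        funext z; by_cases h : z = a <;> simp [h]
      rw [this]
      exact finiteEnergy_smul _ (finiteEnergy_delta a)
    exact finiteEnergy_add hsingle ih

lemma finiteEnergy_finsupp {φ : V → ℝ} (hφ : (Function.support φ).Finite) :
    G.FiniteEnergy φ := by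
  have hrep : φ = fun z => ∑ x ∈ hφ.toFinset, if z = x then φ x else 0 := by
    funext z
    rw [Finset.sum_ite_eq]
    by_cases h : z ∈ hφ.toFinset
    · simp [h]
    · rw [if_neg h]
      by_contra hc
      exact h (hφ.mem_toFinset.mpr hc)
  rw [hrep]
  exact finiteEnergy_finsum _ _

lemma energyBilin_zero_right (u : V → ℝ) : G.energyBilin u (fun _ => (0:ℝ)) = 0 := by
  unfold energyBilin
  have e1 : (∑' p : V × V, G.b p.1 p.2 * (u p.1 - u p.2) * ((0:ℝ) - 0)) = 0 := by
    simp
  have e2 : (∑' x : V, G.c x * u x * (0:ℝ)) = 0 := by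
    simp
  rw [e1, e2]; ring

lemma energyBilin_finsum {u : V → ℝ} (hu : G.FiniteEnergy u) (F : Finset V) (ψ : V → ℝ) :
    G.energyBilin u (fun z => ∑ x ∈ F, if z = x then ψ x else 0)
      = ∑ x ∈ F, ψ x * G.energyBilin u (fun z => if z = x then 1 else 0) := by
  induction F using Finset.induction_on with
  | empty => simpa using energyBilin_zero_right u
  | @insert a F ha ih =>
    have hrep : (fun z => ∑ x ∈ insert a F, if z = x then ψ x else 0)
        = fun z => (if z = a then ψ a else 0) + ∑ x ∈ F, if z = x then ψ x else 0 := by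
      funext z
      rw [Finset.sum_insert ha]
    have hsingle_eq : (fun z => if z = a then ψ a else 0)
        = fun z => ψ a * (if z = a then (1:ℝ) else 0) := by
      funext z; by_cases h : z = a <;> simp [h]
    have hsingle : G.FiniteEnergy (fun z => if z = a then ψ a else 0) := by
      rw [hsingle_eq]; exact finiteEnergy_smul _ (finiteEnergy_delta a)
    rw [hrep, energyBilin_add_right hu hsingle (finiteEnergy_finsum F ψ), ih,
      Finset.sum_insert ha]
    congr 1
    rw [hsingle_eq, energyBilin_smul_right]

lemma formalL_mul_m {m : V → ℝ} (hm : ∀ x, 0 < m x) (u : V → ℝ) (x : V) :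
    G.formalL m u x * m x = (∑' y, G.b x y * (u x - u y)) + G.c x * u x := by
  unfold formalL
  rw [div_mul_cancel₀ _ (hm x).ne']

/-- Green's formula for finitely supported functions. -/
lemma green_finsupp {m : V → ℝ} (hm : ∀ x, 0 < m x) {u : V → ℝ} (hu : G.FiniteEnergy u)
    {φ : V → ℝ} (hφ : (Function.support φ).Finite) :
    G.energyBilin u φ = l2inner m (G.formalL m u) φ := by
  have hrep : φ = fun z => ∑ x ∈ hφ.toFinset, if z = x then φ x else 0 := by
    funext z
    rw [Finset.sum_ite_eq]
    by_cases h : z ∈ hφ.toFinset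
    · simp [h]
    · rw [if_neg h]
      by_contra hc
      exact h (hφ.mem_toFinset.mpr hc)
  have lhs : G.energyBilin u φ
      = ∑ x ∈ hφ.toFinset, φ x * (G.formalL m u x * m x) := by
    conv_lhs => rw [hrep]
    rw [energyBilin_finsum hu]
    refine Finset.sum_congr rfl fun x _ => ?_
    rw [energyBilin_delta hu x, formalL_mul_m hm]
  have rhs : l2inner m (G.formalL m u) φ
      = ∑ x ∈ hφ.toFinset, G.formalL m u x * φ x * m x := by
    unfold l2inner
    apply tsum_eq_sum
    intro z hz
    have : φ z = 0 := by
      by_contra h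
      exact hz (hφ.mem_toFinset.mpr h)
    simp [this]
  rw [lhs, rhs]
  exact Finset.sum_congr rfl fun x _ => by ring

lemma l2inner_delta (m : V → ℝ) (w : V → ℝ) (x : V) :
    l2inner m w (fun z => if z = x then 1 else 0) = w x * m x := by
  unfold l2inner
  have : ∀ z, w z * (if z = x then (1:ℝ) else 0) * m z
      = if z = x then w x * m x else 0 := by
    intro z; by_cases h : z = x <;> simp [h]
  rw [tsum_congr this, tsum_ite_eq]

end WeightedGraph
namespace WeightedGraph
open scoped Classical
variable {V : Type*} {G : WeightedGraph V}

/-- Green's formula on the regular form domain, for `u` with `L̃u ∈ ℓ²`. -/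
lemma green_regDom {m : V → ℝ} (hm : ∀ x, 0 < m x) {u : V → ℝ} (hu : G.FiniteEnergy u)
    (hw : MemL2 m (G.formalL m u)) {v : V → ℝ} (hv : v ∈ G.regDom m) :
    G.energyBilin u v = l2inner m (G.formalL m u) v := by
  obtain ⟨hvE, hvL2, f, hfin, hten⟩ := hv
  set w := G.formalL m u with hwdef
  set ε : ℕ → ℝ := fun n => (G.energy (fun x => v x - f n x)).toReal with hε
  set δ : ℕ → ℝ := fun n => ∑' x, (v x - f n x) ^ 2 * m x with hδ
  have hδ_nonneg : ∀ n, 0 ≤ δ n :=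
    fun n => tsum_nonneg fun x => mul_nonneg (sq_nonneg _) (hm x).le
  have hε_nonneg : ∀ n, 0 ≤ ε n := fun n => ENNReal.toReal_nonneg
  have hε0 : Tendsto ε atTop (nhds 0) :=
    squeeze_zero hε_nonneg (fun n => le_add_of_nonneg_right (hδ_nonneg n)) hten
  have hδ0 : Tendsto δ atTop (nhds 0) :=
    squeeze_zero hδ_nonneg (fun n => le_add_of_nonneg_left (hε_nonneg n)) hten
  have hfeE : ∀ n, G.FiniteEnergy (f n) := fun n => finiteEnergy_finsupp (hfin n)
  have hsubE : ∀ n, G.FiniteEnergy (fun x => v x - f n x) :=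
    fun n => finiteEnergy_sub hvE (hfeE n)
  have hfeL2 : ∀ n, MemL2 m (f n) := fun n => memL2_finsupp m (hfin n)
  have hsubL2 : ∀ n, MemL2 m (fun x => v x - f n x) :=
    fun n => memL2_sub (fun x => (hm x).le) hvL2 (hfeL2 n)
  -- Bilinear side
  have hsplit : ∀ n, G.energyBilin u (f n)
      = G.energyBilin u v - G.energyBilin u (fun x => v x - f n x) := by
    intro n
    have : G.energyBilin u v = G.energyBilin u (fun x => v x - f n x)
        + G.energyBilin u (f n) := by
      have hveq : v = fun x => (v x - f n x) + f n x := funext fun x => by ring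
      conv_lhs => rw [hveq]
      exact energyBilin_add_right hu (hsubE n) (hfeE n)
    linarith
  have hBz : Tendsto (fun n => G.energyBilin u (fun x => v x - f n x)) atTop (nhds 0) := by
    rw [tendsto_zero_iff_abs_tendsto_zero]
    have hbound : ∀ n, |G.energyBilin u (fun x => v x - f n x)|
        ≤ Real.sqrt (G.energyBilin u u * ε n) := by
      intro n
      apply Real.abs_le_sqrt
      calc G.energyBilin u (fun x => v x - f n x) ^ 2
          ≤ G.energyBilin u u * G.energyBilin (fun x => v x - f n x) (fun x => v x - f n x) :=
            energyBilin_cs hu (hsubE n)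
        _ = G.energyBilin u u * ε n := by rw [energyBilin_self (hsubE n)]
    refine squeeze_zero (fun n => abs_nonneg _) hbound ?_
    have h1 : Tendsto (fun n => G.energyBilin u u * ε n) atTop (nhds 0) := by
      have := hε0.const_mul (G.energyBilin u u)
      simpa using this
    have h2 := (Real.continuous_sqrt.tendsto 0).comp h1
    simpa [Function.comp_def] using h2
  have hB : Tendsto (fun n => G.energyBilin u (f n)) atTop (nhds (G.energyBilin u v)) := by
    have : Tendsto (fun n => G.energyBilin u v
        - G.energyBilin u (fun x => v x - f n x)) atTop (nhds (G.energyBilin u v - 0)) :=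
      tendsto_const_nhds.sub hBz
    rw [sub_zero] at this
    exact this.congr fun n => (hsplit n).symm
  -- Inner product side
  have hsplit2 : ∀ n, l2inner m w (f n)
      = l2inner m w v - l2inner m w (fun x => v x - f n x) := by
    intro n
    have S1 : Summable fun x => w x * v x * m x :=
      summable_inner (fun x => (hm x).le) hw hvL2
    have S2 : Summable fun x => w x * (v x - f n x) * m x :=
      summable_inner (fun x => (hm x).le) hw (hsubL2 n)
    unfold l2inner
    rw [← Summable.tsum_sub S1 S2]
    exact tsum_congr fun x => by ring
  have hLz : Tendsto (fun n => l2inner m w (fun x => v x - f n x)) atTop (nhds 0) := by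
    rw [tendsto_zero_iff_abs_tendsto_zero]
    have hbound : ∀ n, |l2inner m w (fun x => v x - f n x)|
        ≤ Real.sqrt ((∑' x, w x ^ 2 * m x) * δ n) := by
      intro n
      apply Real.abs_le_sqrt
      exact l2inner_cs (fun x => (hm x).le) hw (hsubL2 n)
    refine squeeze_zero (fun n => abs_nonneg _) hbound ?_
    have h1 : Tendsto (fun n => (∑' x, w x ^ 2 * m x) * δ n) atTop (nhds 0) := by
      have := hδ0.const_mul (∑' x, w x ^ 2 * m x)
      simpa using this
    have h2 := (Real.continuous_sqrt.tendsto 0).comp h1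
    simpa [Function.comp_def] using h2
  have hL : Tendsto (fun n => l2inner m w (f n)) atTop (nhds (l2inner m w v)) := by
    have : Tendsto (fun n => l2inner m w v
        - l2inner m w (fun x => v x - f n x)) atTop (nhds (l2inner m w v - 0)) :=
      tendsto_const_nhds.sub hLz
    rw [sub_zero] at this
    exact this.congr fun n => (hsplit2 n).symm
  -- identify limits
  have heq : ∀ n, G.energyBilin u (f n) = l2inner m w (f n) :=
    fun n => green_finsupp hm hu (hfin n)
  exact tendsto_nhds_unique (hB.congr heq) hL

end WeightedGraph
/-- the generator `L^(D)` of the regular Dirichlet form has domain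
`{u ∈ D(Q^(D)) : L̃u ∈ ℓ²(V,m)}` and acts there as the formal Laplacian `L̃`. -/
theorem regular_generator_domain {V : Type*} [Countable V] (G : WeightedGraph V)
    (m : V → ℝ) (hm : ∀ x, 0 < m x) (A : (V → ℝ) → V → ℝ) (domA : Set (V → ℝ))
    -- (A, domA) is the nonnegative self-adjoint operator associated with Q^(D):
    (h1 : domA ⊆ G.regDom m)
    (h2 : ∀ u ∈ domA, MemL2 m (A u))
    (h3 : ∀ u ∈ domA, ∀ v ∈ G.regDom m, G.energyBilin u v = l2inner m (A u) v)
    (h4 : ∀ u ∈ G.regDom m, ∀ w : V → ℝ, MemL2 m w →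
      (∀ v ∈ G.regDom m, G.energyBilin u v = l2inner m w v) → u ∈ domA) :
    domA = {u | u ∈ G.regDom m ∧ MemL2 m (G.formalL m u)} ∧
      ∀ u ∈ domA, ∀ x, A u x = G.formalL m u x := by
  classical
  have act : ∀ u ∈ domA, ∀ x, A u x = G.formalL m u x := by
    intro u hu x
    have hreg := h1 hu
    have hfe : G.FiniteEnergy u := hreg.1
    have hδ := WeightedGraph.delta_regDom (G := G) m x
    have e1 := h3 u hu _ hδ
    rw [WeightedGraph.l2inner_delta, WeightedGraph.energyBilin_delta hfe x] at e1
    have e2 := WeightedGraph.formalL_mul_m (G := G) hm u x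
    have : A u x * m x = G.formalL m u x * m x := by rw [← e1, e2]
    exact mul_right_cancel₀ (hm x).ne' this
  constructor
  · ext u
    simp only [Set.mem_setOf_eq]
    constructor
    · intro hu
      refine ⟨h1 hu, ?_⟩
      have hA := h2 u hu
      have : G.formalL m u = A u := funext fun x => (act u hu x).symm
      rw [this]
      exact hA
    · rintro ⟨hreg, hL2⟩
      exact h4 u hreg (G.formalL m u) hL2 fun v hv =>
        WeightedGraph.green_regDom hm hreg.1 hL2 hv
  · exact act
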